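/- Let $K$ be a field of characteristic different from 2, $S = K[x,y,z]$, and $I = (x^2, y^2, z^2)$. Then $l = x + y + z$ is a weak Lefschetz element on $S/I$: multiplication by $l$ from $(S/I)_j$ to $(S/I)_{j+1}$ has maximal rank for every $j \ge 0$. -/

import Mathlib

open MvPolynomial

variable {K : Type*} [Field K] {n : ℕ}

/-- The total degree of an exponent vector. -/
def mdeg {n : ℕ} (m : Fin n →₀ ℕ) : ℕ := m.sum fun _ e => e

/-- `I` is a monomial ideal: it contains every monomial of each of its elements. -/
def IsMonomialIdeal (I : Ideal (MvPolynomial (Fin n) K)) : Prop :=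
  ∀ f ∈ I, ∀ m ∈ f.support, (monomial m (1 : K)) ∈ I

/-- `I` is stable: for every monomial `u ∈ I` with largest dividing variable `x_k`,
and every `i ≤ k`, the monomial `(x_i / x_k) * u` lies in `I`. -/
def IsStableIdeal (I : Ideal (MvPolynomial (Fin n) K)) : Prop :=
  ∀ m : Fin n →₀ ℕ, (monomial m (1 : K)) ∈ I →
    ∀ k i : Fin n, m k ≠ 0 → (∀ k', k < k' → m k' = 0) → i ≤ k →
      (monomial (m + Finsupp.single i 1 - Finsupp.single k 1) (1 : K)) ∈ I

/-- `I` is strongly stable: for every monomial `u ∈ I`, every variable `x_k` dividing `u`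
and every `i ≤ k`, the monomial `(x_i / x_k) * u` lies in `I`. -/
def IsStronglyStableIdeal (I : Ideal (MvPolynomial (Fin n) K)) : Prop :=
  ∀ m : Fin n →₀ ℕ, (monomial m (1 : K)) ∈ I →
    ∀ k i : Fin n, m k ≠ 0 → i ≤ k →
      (monomial (m + Finsupp.single i 1 - Finsupp.single k 1) (1 : K)) ∈ I

/-- `v <_lex u` for exponent vectors, lex order with `x_1 > x_2 > ⋯ > x_n`. -/
def lexLt {n : ℕ} (v u : Fin n →₀ ℕ) : Prop :=
  ∃ i : Fin n, (∀ j < i, v j = u j) ∧ v i < u i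

/-- `I` is a lexsegment ideal. -/
def IsLexsegmentIdeal (I : Ideal (MvPolynomial (Fin n) K)) : Prop :=
  IsMonomialIdeal I ∧
    ∀ u v : Fin n →₀ ℕ, (monomial u (1 : K)) ∈ I → mdeg v = mdeg u → lexLt u v →
      (monomial v (1 : K)) ∈ I

/-- The degree `j` piece of `S/I`, as the image of the degree `j` homogeneous polynomials. -/
noncomputable def Qpiece (I : Ideal (MvPolynomial (Fin n) K)) (j : ℕ) :
    Submodule K (MvPolynomial (Fin n) K ⧸ I) :=
  (homogeneousSubmodule (Fin n) K j).map (Ideal.Quotient.mkₐ K I).toLinearMap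

/-- Multiplication by `g` maps `(S/I)_j` injectively (to `(S/I)_{j'}`). -/
def QInj (I : Ideal (MvPolynomial (Fin n) K)) (g : MvPolynomial (Fin n) K)
    (j _j' : ℕ) : Prop :=
  ∀ f₁ ∈ Qpiece I j, ∀ f₂ ∈ Qpiece I j,
    Ideal.Quotient.mk I g * f₁ = Ideal.Quotient.mk I g * f₂ → f₁ = f₂

/-- Multiplication by `g` maps `(S/I)_j` onto `(S/I)_{j'}`. -/
def QSurj (I : Ideal (MvPolynomial (Fin n) K)) (g : MvPolynomial (Fin n) K)
    (j j' : ℕ) : Prop :=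
  ∀ h ∈ Qpiece I j', ∃ f ∈ Qpiece I j, Ideal.Quotient.mk I g * f = h

/-- Multiplication by `g` from `(S/I)_j` to `(S/I)_{j'}` has maximal rank. -/
def MulMaxRank (I : Ideal (MvPolynomial (Fin n) K)) (g : MvPolynomial (Fin n) K)
    (j j' : ℕ) : Prop :=
  QInj I g j j' ∨ QSurj I g j j'


section AuxStmt5

variable {K : Type*} [Field K]

private lemma aux5_deg3 (d : Fin 3 →₀ ℕ) : d.degree = d 0 + d 1 + d 2 := by
  rw [Finsupp.degree_apply, Finset.sum_subset (Finset.subset_univ d.support)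
    (fun i _ hi => Finsupp.notMem_support_iff.mp hi)]
  simp [Fin.sum_univ_three]

private lemma aux5_eq3 {a b : Fin 3 →₀ ℕ} (h0 : a 0 = b 0) (h1 : a 1 = b 1)
    (h2 : a 2 = b 2) : a = b := by
  ext i; fin_cases i <;> assumption

private lemma aux5_ne3 {a b : Fin 3 →₀ ℕ} (i : Fin 3) (h : a i ≠ b i) : a ≠ b :=
  fun he => h (by rw [he])

private lemma aux5_memI {p : MvPolynomial (Fin 3) K} :
    p ∈ Ideal.span {(X 0 : MvPolynomial (Fin 3) K) ^ 2, X 1 ^ 2, X 2 ^ 2} ↔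
      ∀ m ∈ p.support, 2 ≤ m 0 ∨ 2 ≤ m 1 ∨ 2 ≤ m 2 := by
  have hs : ({(X 0 : MvPolynomial (Fin 3) K) ^ 2, X 1 ^ 2, X 2 ^ 2} : Set _) =
      (fun s => monomial s (1 : K)) ''
        {Finsupp.single 0 2, Finsupp.single 1 2, Finsupp.single 2 2} := by
    simp only [Set.image_insert_eq, Set.image_singleton, X_pow_eq_monomial]
  rw [hs, mem_ideal_span_monomial_image]
  refine forall₂_congr fun m _ => ?_
  simp [Finsupp.single_le_iff]

private lemma aux5_coeff_zero {p : MvPolynomial (Fin 3) K}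
    (hp : p ∈ Ideal.span {(X 0 : MvPolynomial (Fin 3) K) ^ 2, X 1 ^ 2, X 2 ^ 2})
    {m : Fin 3 →₀ ℕ} (h0 : m 0 ≤ 1) (h1 : m 1 ≤ 1) (h2 : m 2 ≤ 1) :
    coeff m p = 0 := by
  by_contra h
  rcases aux5_memI.mp hp m (mem_support_iff.mpr h) with h' | h' | h' <;> omega

private lemma aux5_coeff_l_mul (r : MvPolynomial (Fin 3) K) (m : Fin 3 →₀ ℕ) :
    coeff m ((X 0 + X 1 + X 2) * r) =
      (if m 0 ≠ 0 then coeff (m - Finsupp.single 0 1) r else 0) +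
      (if m 1 ≠ 0 then coeff (m - Finsupp.single 1 1) r else 0) +
      (if m 2 ≠ 0 then coeff (m - Finsupp.single 2 1) r else 0) := by
  rw [add_mul, add_mul, coeff_add, coeff_add, coeff_X_mul', coeff_X_mul', coeff_X_mul']
  simp [Finsupp.mem_support_iff]

private lemma aux5_deg_of_coeff {p : MvPolynomial (Fin 3) K} {nn : ℕ}
    (hp : p.IsHomogeneous nn) {d : Fin 3 →₀ ℕ} (hd : coeff d p ≠ 0) : d.degree = nn := by
  rw [Finsupp.degree_eq_weight_one]; exact hp hd

private lemma aux5_mem_Qpiece {n : ℕ} {I : Ideal (MvPolynomial (Fin n) K)} {j : ℕ}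
    {f : MvPolynomial (Fin n) K ⧸ I} :
    f ∈ Qpiece I j ↔
      ∃ p : MvPolynomial (Fin n) K, p.IsHomogeneous j ∧ Ideal.Quotient.mk I p = f := by
  simp [Qpiece, Submodule.mem_map, mem_homogeneousSubmodule, Ideal.Quotient.mkₐ_eq_mk]

private lemma aux5_inj0 (I : Ideal (MvPolynomial (Fin 3) K))
    (hI : I = Ideal.span {(X 0 : MvPolynomial (Fin 3) K) ^ 2, X 1 ^ 2, X 2 ^ 2}) :
    QInj I (X 0 + X 1 + X 2) 0 1 := by
  intro f₁ hf₁ f₂ hf₂ heq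
  obtain ⟨p, hp, rfl⟩ := aux5_mem_Qpiece.mp hf₁
  obtain ⟨q, hq, rfl⟩ := aux5_mem_Qpiece.mp hf₂
  rw [← map_mul, ← map_mul] at heq
  have hlr : (X 0 + X 1 + X 2) * (p - q) ∈
      Ideal.span {(X 0 : MvPolynomial (Fin 3) K) ^ 2, X 1 ^ 2, X 2 ^ 2} := by
    rw [mul_sub, ← hI]
    exact Ideal.Quotient.eq.mp heq
  have hr : (p - q).IsHomogeneous 0 := hp.sub hq
  have h1 : coeff (Finsupp.single 0 1) ((X 0 + X 1 + X 2) * (p - q)) = coeff 0 (p - q) := by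
    rw [aux5_coeff_l_mul]
    simp [Finsupp.single_apply]
  have h2 : coeff (0 : Fin 3 →₀ ℕ) (p - q) = 0 := by
    rw [← h1]
    exact aux5_coeff_zero hlr (by simp) (by simp [Finsupp.single_apply])
      (by simp [Finsupp.single_apply])
  have hr0 : p - q = 0 := by
    ext m
    by_cases hm : m = 0
    · simpa [hm] using h2
    · exact hr.coeff_eq_zero (by rwa [Ne, Finsupp.degree_eq_zero_iff])
  have : p = q := sub_eq_zero.mp hr0
  rw [this]

private lemma aux5_inj1 (h2 : (2 : K) ≠ 0) (I : Ideal (MvPolynomial (Fin 3) K))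
    (hI : I = Ideal.span {(X 0 : MvPolynomial (Fin 3) K) ^ 2, X 1 ^ 2, X 2 ^ 2}) :
    QInj I (X 0 + X 1 + X 2) 1 2 := by
  intro f₁ hf₁ f₂ hf₂ heq
  obtain ⟨p, hp, rfl⟩ := aux5_mem_Qpiece.mp hf₁
  obtain ⟨q, hq, rfl⟩ := aux5_mem_Qpiece.mp hf₂
  rw [← map_mul, ← map_mul] at heq
  set r := p - q with hrdef
  have hlr : (X 0 + X 1 + X 2) * r ∈
      Ideal.span {(X 0 : MvPolynomial (Fin 3) K) ^ 2, X 1 ^ 2, X 2 ^ 2} := by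
    rw [hrdef, mul_sub, ← hI]
    exact Ideal.Quotient.eq.mp heq
  have hr : r.IsHomogeneous 1 := hp.sub hq
  have e01 : coeff (Finsupp.single 1 1) r + coeff (Finsupp.single 0 1) r = 0 := by
    have hz := aux5_coeff_zero hlr (m := Finsupp.single 0 1 + Finsupp.single 1 1)
      (by simp [Finsupp.single_apply]) (by simp [Finsupp.single_apply])
      (by simp [Finsupp.single_apply])
    rw [aux5_coeff_l_mul] at hz
    simpa [Finsupp.single_apply, add_tsub_cancel_left, add_tsub_cancel_right] using hz
  have e02 : coeff (Finsupp.single 2 1) r + coeff (Finsupp.single 0 1) r = 0 := by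
    have hz := aux5_coeff_zero hlr (m := Finsupp.single 0 1 + Finsupp.single 2 1)
      (by simp [Finsupp.single_apply]) (by simp [Finsupp.single_apply])
      (by simp [Finsupp.single_apply])
    rw [aux5_coeff_l_mul] at hz
    simpa [Finsupp.single_apply, add_tsub_cancel_left, add_tsub_cancel_right] using hz
  have e12 : coeff (Finsupp.single 2 1) r + coeff (Finsupp.single 1 1) r = 0 := by
    have hz := aux5_coeff_zero hlr (m := Finsupp.single 1 1 + Finsupp.single 2 1)
      (by simp [Finsupp.single_apply]) (by simp [Finsupp.single_apply])
      (by simp [Finsupp.single_apply])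
    rw [aux5_coeff_l_mul] at hz
    simpa [Finsupp.single_apply, add_tsub_cancel_left, add_tsub_cancel_right] using hz
  have ha : coeff (Finsupp.single 0 1) r = 0 := by
    have h2a : 2 * coeff (Finsupp.single 0 1) r = 0 := by linear_combination e01 + e02 - e12
    rcases mul_eq_zero.mp h2a with h | h
    · exact absurd h h2
    · exact h
  have hb : coeff (Finsupp.single 1 1) r = 0 := by linear_combination e01 - ha
  have hc : coeff (Finsupp.single 2 1) r = 0 := by linear_combination e02 - ha
  have hr0 : r = 0 := by
    ext m
    by_cases hm : m.degree = 1
    · rw [aux5_deg3] at hm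
      have : (m 0 = 1 ∧ m 1 = 0 ∧ m 2 = 0) ∨ (m 0 = 0 ∧ m 1 = 1 ∧ m 2 = 0) ∨
          (m 0 = 0 ∧ m 1 = 0 ∧ m 2 = 1) := by omega
      rcases this with ⟨u0, u1, u2⟩ | ⟨u0, u1, u2⟩ | ⟨u0, u1, u2⟩
      · have hm1 : m = Finsupp.single 0 1 := aux5_eq3 (by simp [Finsupp.single_apply, u0])
          (by simp [Finsupp.single_apply, u1]) (by simp [Finsupp.single_apply, u2])
        rw [hm1]; simpa using ha
      · have hm1 : m = Finsupp.single 1 1 := aux5_eq3 (by simp [Finsupp.single_apply, u0])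
          (by simp [Finsupp.single_apply, u1]) (by simp [Finsupp.single_apply, u2])
        rw [hm1]; simpa using hb
      · have hm1 : m = Finsupp.single 2 1 := aux5_eq3 (by simp [Finsupp.single_apply, u0])
          (by simp [Finsupp.single_apply, u1]) (by simp [Finsupp.single_apply, u2])
        rw [hm1]; simpa using hc
    · simpa using hr.coeff_eq_zero hm
  have : p = q := sub_eq_zero.mp hr0
  rw [this]

private lemma aux5_surj2 (I : Ideal (MvPolynomial (Fin 3) K))
    (hI : I = Ideal.span {(X 0 : MvPolynomial (Fin 3) K) ^ 2, X 1 ^ 2, X 2 ^ 2}) :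
    QSurj I (X 0 + X 1 + X 2) 2 3 := by
  intro h hmem
  obtain ⟨p, hp, rfl⟩ := aux5_mem_Qpiece.mp hmem
  set e111 : Fin 3 →₀ ℕ := Finsupp.single 0 1 + Finsupp.single 1 1 + Finsupp.single 2 1
    with he111
  set c := coeff e111 p with hcdef
  set f' : MvPolynomial (Fin 3) K := monomial (Finsupp.single 0 1 + Finsupp.single 1 1) c
    with hf'def
  have hf'hom : f'.IsHomogeneous 2 := isHomogeneous_monomial c (by
    rw [aux5_deg3]; simp [Finsupp.single_apply])
  have hlhom : ((X 0 + X 1 + X 2 : MvPolynomial (Fin 3) K)).IsHomogeneous 1 :=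
    ((isHomogeneous_X K 0).add (isHomogeneous_X K 1)).add (isHomogeneous_X K 2)
  refine ⟨Ideal.Quotient.mk I f', aux5_mem_Qpiece.mpr ⟨f', hf'hom, rfl⟩, ?_⟩
  rw [← map_mul]
  rw [Ideal.Quotient.eq, hI, aux5_memI]
  intro m hm
  by_contra hcon
  push_neg at hcon
  obtain ⟨u0, u1, u2⟩ := hcon
  refine mem_support_iff.mp hm ?_
  rw [coeff_sub]
  by_cases hdeg : m.degree = 3
  · rw [aux5_deg3] at hdeg
    have hm1 : m = e111 := aux5_eq3
      (by simp [he111, Finsupp.single_apply]; omega)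
      (by simp [he111, Finsupp.single_apply]; omega)
      (by simp [he111, Finsupp.single_apply]; omega)
    subst hm1
    rw [aux5_coeff_l_mul]
    have v0 : e111 0 ≠ 0 := by simp [he111, Finsupp.single_apply]
    have v1 : e111 1 ≠ 0 := by simp [he111, Finsupp.single_apply]
    have v2 : e111 2 ≠ 0 := by simp [he111, Finsupp.single_apply]
    rw [if_pos v0, if_pos v1, if_pos v2]
    have w2 : e111 - Finsupp.single 2 1 = Finsupp.single 0 1 + Finsupp.single 1 1 :=
      by rw [he111]; exact add_tsub_cancel_right (α := Fin 3 →₀ ℕ) ..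
    have w0 : e111 - Finsupp.single 0 1 ≠ Finsupp.single 0 1 + Finsupp.single 1 1 := by
      refine aux5_ne3 0 ?_
      simp [he111, Finsupp.tsub_apply, Finsupp.single_apply]
    have w1 : e111 - Finsupp.single 1 1 ≠ Finsupp.single 0 1 + Finsupp.single 1 1 := by
      refine aux5_ne3 1 ?_
      simp [he111, Finsupp.tsub_apply, Finsupp.single_apply]
    rw [hf'def, coeff_monomial, coeff_monomial, coeff_monomial,
      if_neg (fun hh => w0 hh.symm), if_neg (fun hh => w1 hh.symm), if_pos w2.symm]
    rw [← hcdef]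
    ring
  · rw [hp.coeff_eq_zero hdeg, (hlhom.mul hf'hom).coeff_eq_zero hdeg, sub_zero]

private lemma aux5_surjhigh (I : Ideal (MvPolynomial (Fin 3) K))
    (hI : I = Ideal.span {(X 0 : MvPolynomial (Fin 3) K) ^ 2, X 1 ^ 2, X 2 ^ 2}) (j : ℕ) :
    QSurj I (X 0 + X 1 + X 2) (j + 3) (j + 4) := by
  intro h hmem
  obtain ⟨p, hp, rfl⟩ := aux5_mem_Qpiece.mp hmem
  have hpI : p ∈ I := by
    rw [hI, aux5_memI]
    intro m hm
    have hd := aux5_deg_of_coeff hp (mem_support_iff.mp hm)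
    rw [aux5_deg3] at hd
    omega
  exact ⟨0, (Qpiece I (j + 3)).zero_mem, by
    rw [mul_zero]; exact (Ideal.Quotient.eq_zero_iff_mem.mpr hpI).symm⟩

end AuxStmt5

/-- In characteristic different from 2, `l = x + y + z` is a weak Lefschetz element on
`S/(x²,y²,z²)`: multiplication by `l` between consecutive degrees has maximal rank. -/
theorem stmt_5 (h2 : (2 : K) ≠ 0)
    (I : Ideal (MvPolynomial (Fin 3) K))
    (hI : I = Ideal.span {(X 0 : MvPolynomial (Fin 3) K) ^ 2, X 1 ^ 2, X 2 ^ 2}) :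
    ∀ j : ℕ, MulMaxRank I (X 0 + X 1 + X 2) j (j + 1) := by
  intro j
  match j with
  | 0 => exact Or.inl (aux5_inj0 I hI)
  | 1 => exact Or.inl (aux5_inj1 h2 I hI)
  | 2 => exact Or.inr (aux5_surj2 I hI)
  | (j + 3) => exact Or.inr (aux5_surjhigh I hI j)
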